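/- Let G be a connected cyclic undirected graph with n nodes, m edges, cycle basis Σ, winding map w_Σ, and cycle-edge matrix C_Σ ∈ ℝ^{(m−n+1)×m}. Fix u ∈ Img(w_Σ). Then for every equivalence class [θ] ∈ Ω^G_u/𝕋¹ (winding cell modulo uniform rotations) there exists a unique vector x ∈ ℝⁿ with x ⟂ 1_n such that (Bᵀθ) = Bᵀx + 2π C_Σ† u, where C_Σ† is the Moore–Penrose pseudoinverse of C_Σ. -/

import Mathlib

open scoped BigOperators
open Real Matrix

noncomputable section

/-- Counterclockwise difference on the circle: the representative of `α - β` in `[-π, π)`. -/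
def dcc (α β : Real.Angle) : ℝ := -((β - α).toReal)

/-- An oriented (multi)graph on node set `Fin n` with edge set `Fin m`;
each edge has a source and a target (sink) node. -/
structure OGraph (n m : ℕ) where
  src : Fin m → Fin n
  tgt : Fin m → Fin n
  noLoop : ∀ e, src e ≠ tgt e

namespace OGraph

variable {n m : ℕ}

/-- Incidence matrix `B`: entry `+1` at the sink (target) of an edge, `-1` at its source. -/
def inc (G : OGraph n m) : Matrix (Fin n) (Fin m) ℝ :=
  Matrix.of fun k e => if k = G.tgt e then (1 : ℝ) else if k = G.src e then -1 else 0

/-- Two nodes are adjacent if some edge joins them. -/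
def adjRel (G : OGraph n m) (i j : Fin n) : Prop :=
  ∃ e, (G.src e = i ∧ G.tgt e = j) ∨ (G.src e = j ∧ G.tgt e = i)

/-- The (undirected) graph is connected. -/
def Connected (G : OGraph n m) : Prop :=
  ∀ i j : Fin n, Relation.ReflTransGen G.adjRel i j

/-- The vector `(Bᵀ θ)` of counterclockwise differences along the oriented edges. -/
def edgeDiff (G : OGraph n m) (θ : Fin n → Real.Angle) : Fin m → ℝ :=
  fun e => dcc (θ (G.tgt e)) (θ (G.src e))

/-- Membership in the punctured `n`-torus: all edge differences have geodesic length `< π`. -/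
def Punctured (G : OGraph n m) (θ : Fin n → Real.Angle) : Prop :=
  ∀ e, |G.edgeDiff θ e| < π

/-- A cycle in the graph: a cyclically ordered sequence of `k + 3 ≥ 3` distinct nodes,
any two consecutive ones joined by an edge, traversed positively or negatively. -/
structure Cycle (G : OGraph n m) where
  k : ℕ
  vert : Fin (k + 3) → Fin n
  vertInj : Function.Injective vert
  edge : Fin (k + 3) → Fin m
  dir : Fin (k + 3) → Bool
  pos_compat : ∀ i, dir i = true → G.tgt (edge i) = vert i ∧ G.src (edge i) = vert (i + 1)
  neg_compat : ∀ i, dir i = false → G.src (edge i) = vert i ∧ G.tgt (edge i) = vert (i + 1)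

namespace Cycle

variable {G : OGraph n m}

/-- The number of nodes of the cycle. -/
def len (σ : G.Cycle) : ℕ := σ.k + 3

/-- Signed cycle vector `v_σ ∈ {-1,0,1}^m`. -/
def sgnVec (σ : G.Cycle) : Fin m → ℝ := fun e =>
  ∑ i : Fin (σ.k + 3), if σ.edge i = e then (if σ.dir i then (1 : ℝ) else -1) else 0

/-- Winding number of `θ` along the cycle `σ`. -/
def winding (σ : G.Cycle) (θ : Fin n → Real.Angle) : ℝ :=
  (1 / (2 * π)) * ∑ i : Fin (σ.k + 3), dcc (θ (σ.vert i)) (θ (σ.vert (i + 1)))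

end Cycle

/-- A family of cycles is a cycle basis if the signed cycle vectors form a basis
of the cycle space `Ker B`. -/
def IsCycleBasis (G : OGraph n m) (c : Fin (m + 1 - n) → G.Cycle) : Prop :=
  LinearIndependent ℝ (fun i => (c i).sgnVec) ∧
    Submodule.span ℝ (Set.range fun i => (c i).sgnVec) = LinearMap.ker G.inc.mulVecLin

/-- Cycle–edge matrix `C_Σ`, whose rows are the signed cycle vectors. -/
def cycMat (G : OGraph n m) (c : Fin (m + 1 - n) → G.Cycle) :
    Matrix (Fin (m + 1 - n)) (Fin m) ℝ :=
  Matrix.of fun i e => (c i).sgnVec e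

/-- Winding map along a family of cycles. -/
def windingMap (G : OGraph n m) (c : Fin (m + 1 - n) → G.Cycle)
    (θ : Fin n → Real.Angle) : Fin (m + 1 - n) → ℝ :=
  fun i => (c i).winding θ

/-- Image of the winding map over the punctured torus. -/
def windingImage (G : OGraph n m) (c : Fin (m + 1 - n) → G.Cycle) :
    Set (Fin (m + 1 - n) → ℝ) :=
  {u | ∃ θ, G.Punctured θ ∧ G.windingMap c θ = u}

/-- The `u`-winding cell `Ω^G_u = w_Σ⁻¹(u)`. -/
def windingCell (G : OGraph n m) (c : Fin (m + 1 - n) → G.Cycle)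
    (u : Fin (m + 1 - n) → ℝ) : Set (Fin n → Real.Angle) :=
  {θ | G.Punctured θ ∧ G.windingMap c θ = u}

end OGraph

/-- `(f, θ)` is a solution of the flow network problem for `(G, {h_e}, p, γ)`. -/
def IsFlowSol {n m : ℕ} (G : OGraph n m) (a : Fin m → ℝ) (h : Fin m → ℝ → ℝ)
    (p : Fin n → ℝ) (γ : ℝ) (f : Fin m → ℝ) (θ : Fin n → Real.Angle) : Prop :=
  G.inc.mulVec f = p ∧ (∀ e, f e = a e * h e (G.edgeDiff θ e)) ∧
    ∀ e, |G.edgeDiff θ e| ≤ γ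

/-- A flow function: continuously differentiable, `2π`-periodic, odd. -/
def IsFlowFun (h : ℝ → ℝ) : Prop :=
  ContDiff ℝ 1 h ∧ Function.Periodic h (2 * π) ∧ ∀ x, h (-x) = -h x

/-- Monotone on a set: strictly increasing or strictly decreasing. -/
def StrictMonoOrAntiOn (h : ℝ → ℝ) (s : Set ℝ) : Prop :=
  StrictMonoOn h s ∨ StrictAntiOn h s

/-- `ψ` is obtained from `θ` by a rigid rotation `rot_s`, `s ∈ [-π, π)`. -/
def RotEquiv {n : ℕ} (θ ψ : Fin n → Real.Angle) : Prop :=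
  ∃ s ∈ Set.Ico (-π) π, ∀ i, ψ i = θ i + (s : Real.Angle)

/-- `N` is the Moore–Penrose pseudoinverse of `M`. -/
def IsMoorePenrose {k l : ℕ} (M : Matrix (Fin k) (Fin l) ℝ)
    (N : Matrix (Fin l) (Fin k) ℝ) : Prop :=
  M * N * M = M ∧ N * M * N = N ∧ (M * N)ᵀ = M * N ∧ (N * M)ᵀ = N * M

/-- `D`-weighted norm `‖v‖_D = ‖D^{1/2} v‖₂` for a positive diagonal weight `d`. -/
def wNorm {k : ℕ} (d v : Fin k → ℝ) : ℝ := Real.sqrt (∑ e, d e * v e ^ 2)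

/-- `∞`-norm of a matrix: maximum absolute row sum. -/
def matInfNorm {k l : ℕ} (M : Matrix (Fin k) (Fin l) ℝ) : ℝ := ⨆ i, ∑ j, |M i j|

/-- The extended flow function `h_γ` (one scalar component). -/
def extFlow (h : ℝ → ℝ) (γ : ℝ) : ℝ → ℝ := fun y =>
  if γ ≤ y then deriv h γ * (y - γ) + h γ
  else if y ≤ -γ then deriv h γ * (y + γ) + h (-γ)
  else h y

/-- The vector `h_γ^{-1}(𝒜^{-1} f)`. -/
def hGammaInv {m : ℕ} (h : Fin m → ℝ → ℝ) (γ : ℝ) (a f : Fin m → ℝ) : Fin m → ℝ :=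
  fun e => Function.invFun (extFlow (h e) γ) (f e / a e)

/-- `(L_min)_{ee} = min_{y ∈ [-γ,γ]} h_e'(y)`. -/
def lminOf {m : ℕ} (h : Fin m → ℝ → ℝ) (γ : ℝ) : Fin m → ℝ :=
  fun e => sInf (deriv (h e) '' Set.Icc (-γ) γ)

/-- `(L_max)_{ee} = max_{y ∈ [-γ,γ]} h_e'(y)`. -/
def lmaxOf {m : ℕ} (h : Fin m → ℝ → ℝ) (γ : ℝ) : Fin m → ℝ :=
  fun e => sSup (deriv (h e) '' Set.Icc (-γ) γ)

/-- The `D`-weighted cycle projection `𝒫_D = I - D𝒜Bᵀ(B D𝒜 Bᵀ)† B`, where `N`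
stands for the pseudoinverse `(B D𝒜 Bᵀ)†`. -/
def cycProj {n m : ℕ} (G : OGraph n m) (a d : Fin m → ℝ)
    (N : Matrix (Fin n) (Fin n) ℝ) : Matrix (Fin m) (Fin m) ℝ :=
  1 - Matrix.diagonal d * Matrix.diagonal a * G.incᵀ * N * G.inc

/-- The `u`-winding fixed-point map `T_u`. -/
def Tmap {n m : ℕ} (G : OGraph n m) (a : Fin m → ℝ) (h : Fin m → ℝ → ℝ) (γ : ℝ)
    (N : Matrix (Fin n) (Fin n) ℝ) (Cdag : Matrix (Fin m) (Fin (m + 1 - n)) ℝ)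
    (u : Fin (m + 1 - n) → ℝ) (f : Fin m → ℝ) : Fin m → ℝ :=
  f - (cycProj G a (lminOf h γ) N).mulVec
    ((Matrix.diagonal (lminOf h γ) * Matrix.diagonal a).mulVec
      (hGammaInv h γ a f - (2 * π) • Cdag.mulVec u))

/-- The `u`-winding balance equation. -/
def WindingBalance {n m : ℕ} (G : OGraph n m) (a : Fin m → ℝ) (h : Fin m → ℝ → ℝ)
    (p : Fin n → ℝ) (γ : ℝ) (N : Matrix (Fin n) (Fin n) ℝ)
    (Cdag : Matrix (Fin m) (Fin (m + 1 - n)) ℝ) (u : Fin (m + 1 - n) → ℝ)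
    (f : Fin m → ℝ) : Prop :=
  G.inc.mulVec f = p ∧
    (cycProj G a (lminOf h γ) N).mulVec
      ((Matrix.diagonal (lminOf h γ) * Matrix.diagonal a).mulVec
        (hGammaInv h γ a f - (2 * π) • Cdag.mulVec u)) = 0 ∧
    ∀ e, |f e| ≤ a e * |h e γ|


section Aux

variable {n m : ℕ}

lemma dcc_antisymm {α β : Real.Angle} (h : |dcc α β| < π) : dcc β α = -dcc α β := by
  have hx : |(β - α).toReal| < π := by simpa [dcc, abs_neg] using h
  obtain ⟨hl, hr⟩ := abs_lt.1 hx
  have hneg : (-(β - α)).toReal = -((β - α).toReal) := by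
    conv_lhs => rw [← Real.Angle.coe_toReal (β - α), ← Real.Angle.coe_neg]
    exact Real.Angle.toReal_coe_eq_self_iff.2 ⟨by linarith, by linarith⟩
  have h2 : α - β = -(β - α) := (neg_sub _ _).symm
  unfold dcc
  rw [h2, hneg]

lemma sgnVec_dot {G : OGraph n m} (σ : G.Cycle) {θ : Fin n → Real.Angle}
    (hp : G.Punctured θ) :
    ∑ e, σ.sgnVec e * G.edgeDiff θ e = 2 * π * σ.winding θ := by
  have hsum : ∑ e, σ.sgnVec e * G.edgeDiff θ e
      = ∑ i : Fin (σ.k + 3), (if σ.dir i then (1:ℝ) else -1) * G.edgeDiff θ (σ.edge i) := by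
    unfold OGraph.Cycle.sgnVec
    simp only [Finset.sum_mul]
    rw [Finset.sum_comm]
    refine Finset.sum_congr rfl fun i _ => ?_
    simp only [ite_mul, zero_mul, Finset.sum_ite_eq, Finset.mem_univ, if_true]
  rw [hsum]
  have hterm : ∀ i : Fin (σ.k + 3), (if σ.dir i then (1:ℝ) else -1) * G.edgeDiff θ (σ.edge i)
      = dcc (θ (σ.vert i)) (θ (σ.vert (i + 1))) := by
    intro i
    by_cases hd : σ.dir i
    · obtain ⟨h1, h2⟩ := σ.pos_compat i hd
      simp [hd, OGraph.edgeDiff, h1, h2]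
    · obtain ⟨h1, h2⟩ := σ.neg_compat i (by simpa using hd)
      have hanti := dcc_antisymm (α := θ (G.tgt (σ.edge i))) (β := θ (G.src (σ.edge i)))
        (hp (σ.edge i))
      rw [if_neg hd]
      simp only [OGraph.edgeDiff] at *
      rw [h1, h2] at hanti
      rw [h1, h2]
      linarith
  rw [Finset.sum_congr rfl fun i _ => hterm i]
  unfold OGraph.Cycle.winding
  have hπ : (2 * π) ≠ 0 := by positivity
  field_simp

lemma cycMat_mulVec_edgeDiff {G : OGraph n m} (c : Fin (m+1-n) → G.Cycle)
    {θ : Fin n → Real.Angle} (hp : G.Punctured θ) {u : Fin (m+1-n) → ℝ}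
    (hw : G.windingMap c θ = u) :
    (G.cycMat c).mulVec (G.edgeDiff θ) = (2 * π) • u := by
  funext i
  have := sgnVec_dot (c i) hp
  have hwi : (c i).winding θ = u i := by rw [← hw]; rfl
  simpa [Matrix.mulVec, dotProduct, OGraph.cycMat, hwi] using this

lemma cycMat_mul_pinv {G : OGraph n m} {c : Fin (m+1-n) → G.Cycle}
    (hli : LinearIndependent ℝ (fun i => (c i).sgnVec))
    {Cdag : Matrix (Fin m) (Fin (m+1-n)) ℝ}
    (h1 : G.cycMat c * Cdag * G.cycMat c = G.cycMat c) :
    G.cycMat c * Cdag = 1 := by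
  ext i k
  have key : ∑ j, (((G.cycMat c * Cdag) i j - (1 : Matrix (Fin (m+1-n)) (Fin (m+1-n)) ℝ) i j)
      • (c j).sgnVec) = 0 := by
    funext e
    simp only [Finset.sum_apply, Pi.smul_apply, smul_eq_mul, sub_mul, Finset.sum_sub_distrib,
      Pi.zero_apply]
    have hA : (G.cycMat c * Cdag * G.cycMat c) i e
        = ∑ j, (G.cycMat c * Cdag) i j * (c j).sgnVec e := Matrix.mul_apply
    have hI : ∑ j, (1 : Matrix (Fin (m+1-n)) (Fin (m+1-n)) ℝ) i j * (c j).sgnVec e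
        = G.cycMat c i e := by
      simp only [Matrix.one_apply, ite_mul, one_mul, zero_mul, Finset.sum_ite_eq,
        Finset.mem_univ, if_true]
      rfl
    rw [← hA, hI, h1, sub_self]
  have := Fintype.linearIndependent_iff.1 hli
    (fun j => (G.cycMat c * Cdag) i j - (1 : Matrix (Fin (m+1-n)) (Fin (m+1-n)) ℝ) i j) key k
  linarith

lemma inc_entry (G : OGraph n m) (e : Fin m) (k : Fin n) :
    G.inc k e = (if k = G.tgt e then (1:ℝ) else 0) - (if k = G.src e then 1 else 0) := by
  unfold OGraph.inc
  by_cases h1 : k = G.tgt e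
  · simp [h1, (G.noLoop e).symm]
  · by_cases h2 : k = G.src e
    · simp [h1, h2, G.noLoop e]
    · simp [h1, h2]

lemma incT_mulVec (G : OGraph n m) (v : Fin n → ℝ) (e : Fin m) :
    G.incᵀ.mulVec v e = v (G.tgt e) - v (G.src e) := by
  simp [Matrix.mulVec, dotProduct, Matrix.transpose_apply, inc_entry, sub_mul,
    ite_mul, Finset.sum_sub_distrib]

end Aux

/-- Polytopic characterization, part 1: for every `θ` in the
`u`-winding cell there is a unique `x ⟂ 1_n` with `Bᵀθ = Bᵀx + 2π C_Σ† u`. -/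
theorem winding_cell_unique_lift {n m : ℕ} (G : OGraph n m)
    (hconn : G.Connected) (hcyc : Nonempty G.Cycle)
    (c : Fin (m + 1 - n) → G.Cycle) (hbasis : G.IsCycleBasis c)
    (Cdag : Matrix (Fin m) (Fin (m + 1 - n)) ℝ)
    (hCdag : IsMoorePenrose (G.cycMat c) Cdag)
    (u : Fin (m + 1 - n) → ℝ) (hu : u ∈ G.windingImage c)
    (θ : Fin n → Real.Angle) (hθ : θ ∈ G.windingCell c u) :
    ∃! x : Fin n → ℝ, (∑ i, x i = 0) ∧
      G.edgeDiff θ = G.incᵀ.mulVec x + (2 * π) • Cdag.mulVec u := by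
  obtain ⟨hp, hw⟩ := hθ
  obtain ⟨σ0⟩ := hcyc
  have hn : 0 < n := (σ0.vert 0).pos
  have hCC : G.cycMat c * Cdag = 1 := cycMat_mul_pinv hbasis.1 hCdag.1
  have hCy : (G.cycMat c).mulVec (G.edgeDiff θ) = (2 * π) • u :=
    cycMat_mulVec_edgeDiff c hp hw
  set z : Fin m → ℝ := G.edgeDiff θ - (2 * π) • Cdag.mulVec u with hzdef
  have hCz : (G.cycMat c).mulVec z = 0 := by
    rw [hzdef, Matrix.mulVec_sub, hCy, Matrix.mulVec_smul, Matrix.mulVec_mulVec, hCC,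
      Matrix.one_mulVec, sub_self]
  have hCBt : G.cycMat c * G.incᵀ = 0 := by
    ext k i
    have hmem : (c k).sgnVec ∈ LinearMap.ker G.inc.mulVecLin := by
      rw [← hbasis.2]; exact Submodule.subset_span ⟨k, rfl⟩
    have h0 : G.inc.mulVec ((c k).sgnVec) i = 0 := congrFun (LinearMap.mem_ker.1 hmem) i
    simp only [Matrix.mul_apply, Matrix.transpose_apply, Matrix.zero_apply]
    calc ∑ e, G.cycMat c k e * G.inc i e = ∑ e, G.inc i e * (c k).sgnVec e := by
          refine Finset.sum_congr rfl fun e _ => ?_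
          rw [mul_comm]; rfl
      _ = 0 := by simpa [Matrix.mulVec, dotProduct] using h0
  have hle : LinearMap.range (G.incᵀ.mulVecLin) ≤ LinearMap.ker ((G.cycMat c).mulVecLin) := by
    rintro w ⟨x, rfl⟩
    show (G.cycMat c).mulVec (G.incᵀ.mulVec x) = 0
    rw [Matrix.mulVec_mulVec, hCBt, Matrix.zero_mulVec]
  have hkerB : Module.finrank ℝ (LinearMap.ker G.inc.mulVecLin) = m + 1 - n := by
    rw [← hbasis.2, finrank_span_eq_card hbasis.1, Fintype.card_fin]
  have hRN_B := LinearMap.finrank_range_add_finrank_ker G.inc.mulVecLin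
  rw [Module.finrank_fintype_fun_eq_card, Fintype.card_fin, hkerB] at hRN_B
  have hrankC : (G.cycMat c).rank = m + 1 - n := by
    rw [← Matrix.rank_transpose, Matrix.rank, Matrix.range_mulVecLin]
    have hre : Set.range (G.cycMat c)ᵀ.col = Set.range fun i => (c i).sgnVec := rfl
    rw [hre, finrank_span_eq_card hbasis.1, Fintype.card_fin]
  have hRN_C := LinearMap.finrank_range_add_finrank_ker (G.cycMat c).mulVecLin
  rw [Module.finrank_fintype_fun_eq_card, Fintype.card_fin] at hRN_C
  have hfrC : Module.finrank ℝ (LinearMap.range (G.cycMat c).mulVecLin) = m + 1 - n := hrankC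
  have hfrBT : Module.finrank ℝ (LinearMap.range G.incᵀ.mulVecLin)
      = Module.finrank ℝ (LinearMap.range G.inc.mulVecLin) := Matrix.rank_transpose G.inc
  have heq : LinearMap.range (G.incᵀ.mulVecLin) = LinearMap.ker ((G.cycMat c).mulVecLin) :=
    Submodule.eq_of_le_of_finrank_eq hle (by rw [hfrBT]; omega)
  have hzmem : z ∈ LinearMap.range G.incᵀ.mulVecLin := by
    rw [heq]; exact LinearMap.mem_ker.2 hCz
  obtain ⟨x0, hx0⟩ := hzmem
  have hBt_const : ∀ s : ℝ, G.incᵀ.mulVec (fun _ => s) = 0 := by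
    intro s; funext e; simp [incT_mulVec]
  set x : Fin n → ℝ := x0 - fun _ => (∑ i, x0 i) / n with hxdef
  have hsum : ∑ i, x i = 0 := by
    have hn' : (n : ℝ) ≠ 0 := Nat.cast_ne_zero.2 hn.ne'
    simp only [hxdef, Pi.sub_apply, Finset.sum_sub_distrib, Finset.sum_const,
      Finset.card_univ, Fintype.card_fin, nsmul_eq_mul]
    field_simp
    ring
  have hxeq : G.incᵀ.mulVec x = z := by
    rw [hxdef, Matrix.mulVec_sub, hBt_const, sub_zero]
    exact hx0
  refine ⟨x, ⟨hsum, ?_⟩, ?_⟩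
  · rw [hxeq, hzdef, sub_add_cancel]
  · rintro x' ⟨hs', he'⟩
    have hBx' : G.incᵀ.mulVec x' = z := by
      rw [hzdef, he', add_sub_cancel_right]
    have hB0 : G.incᵀ.mulVec (x' - x) = 0 := by
      rw [Matrix.mulVec_sub, hxeq, hBx', sub_self]
    set v := x' - x with hvdef
    have hedge : ∀ e, v (G.tgt e) = v (G.src e) := by
      intro e
      have h := congrFun hB0 e
      rw [incT_mulVec] at h
      simp only [Pi.zero_apply] at h
      linarith
    have hall : ∀ i j : Fin n, v i = v j := by
      intro i j
      induction hconn i j with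
      | refl => rfl
      | tail _ hadj ih =>
        obtain ⟨e, hcase⟩ := hadj
        rcases hcase with ⟨h1, h2⟩ | ⟨h1, h2⟩
        · exact ih.trans (by rw [← h1, ← h2]; exact (hedge e).symm)
        · exact ih.trans (by rw [← h1, ← h2]; exact hedge e)
    have hvsum : ∑ i, v i = 0 := by
      simp [hvdef, Finset.sum_sub_distrib, hs', hsum]
    have hv0 : ∀ i, v i = 0 := by
      intro i
      have hc : ∑ j, v j = ∑ _j : Fin n, v i := Finset.sum_congr rfl fun j _ => hall j i
      rw [hvsum, Finset.sum_const, Finset.card_univ, Fintype.card_fin, nsmul_eq_mul] at hc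
      have hn' : (n : ℝ) ≠ 0 := Nat.cast_ne_zero.2 hn.ne'
      rcases mul_eq_zero.1 hc.symm with h | h
      · exact absurd h hn'
      · exact h
    have hveq : v = 0 := funext hv0
    exact sub_eq_zero.1 hveq


end
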